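/- Assume P(S_t v) = e^{−tD} v for all t ≥ 0 and all v ∈ W. If g ∈ W satisfies ⟨g, D g⟩ > 0, then the map t ↦ S_t g is not differentiable at t = 0; that is, there is no h ∈ H with (S_t g − g)/t → h in H as t → 0. In particular, g does not belong to the domain of the generator of the group (S_t). -/

import Mathlib

open RealInnerProductSpace

/-- Helper instance: the ring of continuous endomorphisms of a submodule of an inner
product space, with its operator-norm topology, is a topological ring.  (This instance
exists in Mathlib but is not found by instance search at reducible transparency.) -/
noncomputable instance topologicalRing_clm_submodule'
    {H : Type*} [NormedAddCommGroup H] [InnerProductSpace ℝ H]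
    (W : Submodule ℝ H) : IsTopologicalRing (↥W →L[ℝ] ↥W) := by
  exact @NonUnitalSeminormedRing.toIsTopologicalRing (↥W →L[ℝ] ↥W) inferInstance

/-- Let `H` be a real Hilbert space and `(S_t)_{t∈ℝ}` a group of
unitary operators on `H`, `W ⊆ H` a finite-dimensional subspace with orthogonal
projection `P`, and `D : W → W` linear with the compression property
`P(S_t v) = e^{−tD} v` for `t ≥ 0`, `v ∈ W`.  If `g ∈ W` satisfies `⟨g, Dg⟩ > 0`,
then `t ↦ S_t g` is not differentiable at `t = 0`: there is no `h ∈ H` with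
`(S_t g − g)/t → h` as `t → 0`.  In particular `g` is not in the domain of the
generator of the group `(S_t)`. -/
theorem coupling_vector_not_in_generator_domain
    {H : Type*} [NormedAddCommGroup H] [InnerProductSpace ℝ H] [CompleteSpace H]
    (S : ℝ → H →L[ℝ] H)
    (hS0 : S 0 = ContinuousLinearMap.id ℝ H)
    (hSadd : ∀ t s : ℝ, S (t + s) = (S t) ∘L (S s))
    (hSiso : ∀ (t : ℝ) (x : H), ‖S t x‖ = ‖x‖)
    (hSsurj : ∀ t : ℝ, Function.Surjective (S t))
    (W : Submodule ℝ H) [FiniteDimensional ℝ W]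
    (D : W →L[ℝ] W)
    (hcomp : ∀ t : ℝ, 0 ≤ t → ∀ v : W,
      W.orthogonalProjectionOnto (S t (v : H)) = NormedSpace.exp ((-t) • D) v)
    (g : W) (hg : 0 < ⟪g, D g⟫) :
    ¬ ∃ h : H, Filter.Tendsto (fun t : ℝ => t⁻¹ • (S t (g : H) - (g : H)))
        (nhdsWithin 0 {0}ᶜ) (nhds h) := by
  rintro ⟨h, hh⟩
  -- inner products are preserved by each `S t`
  have hinner : ∀ (t : ℝ) (x y : H), ⟪S t x, S t y⟫ = ⟪x, y⟫ := fun t x y =>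
    LinearIsometry.inner_map_map ⟨(S t : H →ₗ[ℝ] H), hSiso t⟩ x y
  have hgroup : ∀ (t : ℝ) (x : H), S t (S (-t) x) = x := by
    intro t x
    have := congrArg (fun T : H →L[ℝ] H => T x) (hSadd t (-t))
    simp only [add_neg_cancel, hS0] at this
    simpa using this.symm
  set F : ℝ → ℝ := fun t => ⟪(g : H), S t (g : H)⟫ with hF
  have heven : ∀ t : ℝ, F (-t) = F t := by
    intro t
    have h1 : ⟪(g : H), S (-t) (g : H)⟫ = ⟪S t (g : H), S t (S (-t) (g : H))⟫ :=
      (hinner t _ _).symm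
    rw [hF]
    simp only []
    rw [h1, hgroup t (g : H), real_inner_comm]
  set f : ℝ → ℝ := fun t => ⟪g, NormedSpace.exp ((-t) • D) g⟫ with hf
  have hFf : ∀ t : ℝ, 0 ≤ t → F t = f t := by
    intro t ht
    have horth := W.starProjection_inner_eq_zero (S t (g : H)) (g : H) g.2
    rw [Submodule.starProjection_apply] at horth
    have : ⟪(g : H), S t (g : H)⟫
        = ⟪(g : H), ((W.orthogonalProjectionOnto (S t (g : H)) : W) : H)⟫ := by
      rw [inner_sub_left] at horth
      have e1 : ⟪(g : H), S t (g : H)⟫ = ⟪S t (g : H), (g : H)⟫ := real_inner_comm _ _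
      have e2 : ⟪(g : H), ((W.orthogonalProjectionOnto (S t (g : H)) : W) : H)⟫
          = ⟪((W.orthogonalProjectionOnto (S t (g : H)) : W) : H), (g : H)⟫ := real_inner_comm _ _
      rw [e1, e2]
      linarith
    rw [hF, hf]
    simp only []
    rw [this, hcomp t ht g, ← Submodule.coe_inner]
  -- the derivative of f at 0 is -⟪g, D g⟫
  have hexp : HasDerivAt (fun u : ℝ => NormedSpace.exp (u • D)) D 0 := by
    have := hasDerivAt_exp_smul_const (𝕂 := ℝ) D (0 : ℝ)
    rw [zero_smul ℝ D, NormedSpace.exp_zero, one_mul] at this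
    exact this
  have hneg : HasDerivAt (fun t : ℝ => -t) (-1 : ℝ) 0 := by
    exact hasDerivAt_neg' 0
  have hexpneg : HasDerivAt (fun t : ℝ => NormedSpace.exp ((-t) • D)) (-D) 0 := by
    have := HasDerivAt.scomp (x := (0 : ℝ)) (F := ↥W →L[ℝ] ↥W) (by simpa using hexp) hneg
    simpa [Function.comp_def] using this
  have happ : HasDerivAt (fun t : ℝ => NormedSpace.exp ((-t) • D) g) (-(D g)) 0 := by
    have := hexpneg.clm_apply (hasDerivAt_const 0 g)
    simpa using this
  have hfderiv : HasDerivAt f (-⟪g, D g⟫) 0 := by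
    have := (hasDerivAt_const (0 : ℝ) g).inner ℝ happ
    simpa [hf] using this
  -- the hypothesis gives a derivative of F at 0
  have hF0 : F 0 = ⟪(g : H), (g : H)⟫ := by rw [hF]; simp [hS0]
  have hslope : ∀ t : ℝ, slope F 0 t = ⟪(g : H), t⁻¹ • (S t (g : H) - (g : H))⟫ := by
    intro t
    rw [slope_def_field, hF0, hF]
    simp only [inner_smul_right, inner_sub_right]
    ring
  have hFd : HasDerivAt F ⟪(g : H), h⟫ 0 := by
    rw [hasDerivAt_iff_tendsto_slope]
    have hcont : Filter.Tendsto (fun x : H => ⟪(g : H), x⟫) (nhds h) (nhds ⟪(g : H), h⟫) :=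
      (continuous_const.inner continuous_id).continuousAt
    have := hcont.comp hh
    exact this.congr (fun t => (hslope t).symm)
  -- since F is even, its derivative at 0 is 0
  have hFneg : HasDerivAt F (-⟪(g : H), h⟫) 0 := by
    have := HasDerivAt.scomp (x := (0 : ℝ)) (by simpa using hFd) hneg
    have h2 : (fun t : ℝ => F (-t)) = F := funext heven
    simp only [Function.comp_def] at this
    rw [h2] at this
    simpa using this
  have hzero : ⟪(g : H), h⟫ = 0 := by
    have := hFd.unique hFneg
    linarith
  -- compare slopes of F and f on the right of 0
  have hmono : nhdsWithin (0 : ℝ) (Set.Ioi 0) ≤ nhdsWithin (0 : ℝ) {(0 : ℝ)}ᶜ :=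
    nhdsWithin_mono 0 (fun x hx => ne_of_gt hx)
  have hFt : Filter.Tendsto (slope F 0) (nhdsWithin 0 (Set.Ioi 0)) (nhds 0) := by
    have := hasDerivAt_iff_tendsto_slope.mp hFd
    rw [hzero] at this
    exact this.mono_left hmono
  have hft : Filter.Tendsto (slope f 0) (nhdsWithin 0 (Set.Ioi 0)) (nhds (-⟪g, D g⟫)) :=
    (hasDerivAt_iff_tendsto_slope.mp hfderiv).mono_left hmono
  have heq : slope F 0 =ᶠ[nhdsWithin 0 (Set.Ioi 0)] slope f 0 := by
    refine eventually_nhdsWithin_of_forall (fun t ht => ?_)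
    rw [slope_def_field, slope_def_field, hFf t (le_of_lt ht), hFf 0 le_rfl]
  have hFt' : Filter.Tendsto (slope F 0) (nhdsWithin 0 (Set.Ioi 0)) (nhds (-⟪g, D g⟫)) :=
    (Filter.Tendsto.congr' heq.symm hft)
  have : (0 : ℝ) = -⟪g, D g⟫ := tendsto_nhds_unique hFt hFt'
  linarith
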